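/- For x ∈ ℝ³ with ‖x‖_H ≠ 0, the horizontal Laplacian of ‖x‖_H² equals Δ_H(‖x‖_H²) = 9(x₁²+x₂²)/‖x‖_H² − |D_H(‖x‖_H²)|²/‖x‖_H². -/

import Mathlib

/-- Partial derivative of `u` in the `i`-th coordinate direction. -/
noncomputable def pd (i : Fin 3) (u : (Fin 3 → ℝ) → ℝ) (x : Fin 3 → ℝ) : ℝ :=
  fderiv ℝ u x (Pi.single i 1)

/-- The Heisenberg vector field X₁ = ∂₁ - x₂ ∂₃. -/
noncomputable def X1 (u : (Fin 3 → ℝ) → ℝ) (x : Fin 3 → ℝ) : ℝ :=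
  pd 0 u x - x 1 * pd 2 u x

/-- The Heisenberg vector field X₂ = ∂₂ + x₁ ∂₃. -/
noncomputable def X2 (u : (Fin 3 → ℝ) → ℝ) (x : Fin 3 → ℝ) : ℝ :=
  pd 1 u x + x 0 * pd 2 u x

/-- The Heisenberg norm ‖x‖_H = ((x₁²+x₂²)² + x₃²)^{1/4}. -/
noncomputable def hnorm (x : Fin 3 → ℝ) : ℝ :=
  ((x 0 ^ 2 + x 1 ^ 2) ^ 2 + (x 2) ^ 2) ^ ((1 : ℝ) / 4)

/-- The squared Heisenberg norm, ‖x‖_H² = √((x₁²+x₂²)² + x₃²). -/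
noncomputable def hnormSq (x : Fin 3 → ℝ) : ℝ :=
  Real.sqrt ((x 0 ^ 2 + x 1 ^ 2) ^ 2 + (x 2) ^ 2)

namespace HAux

/-- the inner polynomial -/
def gf (y : Fin 3 → ℝ) : ℝ := (y 0 ^ 2 + y 1 ^ 2) ^ 2 + y 2 ^ 2

lemma gf_nonneg (y : Fin 3 → ℝ) : 0 ≤ gf y := by unfold gf; positivity

lemma pd_eq {u : (Fin 3 → ℝ) → ℝ} {L : (Fin 3 → ℝ) →L[ℝ] ℝ} {x : Fin 3 → ℝ}
    (h : HasFDerivAt u L x) (i : Fin 3) : pd i u x = L (Pi.single i 1) := by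
  rw [pd, h.fderiv]

lemma hasFDerivAt_coord (i : Fin 3) (x : Fin 3 → ℝ) :
    HasFDerivAt (fun y : Fin 3 → ℝ => y i)
      (ContinuousLinearMap.proj i : (Fin 3 → ℝ) →L[ℝ] ℝ) x :=
  (ContinuousLinearMap.proj i : (Fin 3 → ℝ) →L[ℝ] ℝ).hasFDerivAt

noncomputable def Lg (x : Fin 3 → ℝ) : (Fin 3 → ℝ) →L[ℝ] ℝ :=
  (4 * x 0 * (x 0 ^ 2 + x 1 ^ 2)) • ContinuousLinearMap.proj 0 +
  (4 * x 1 * (x 0 ^ 2 + x 1 ^ 2)) • ContinuousLinearMap.proj 1 +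
  (2 * x 2) • ContinuousLinearMap.proj 2

lemma hasFDerivAt_gf (x : Fin 3 → ℝ) : HasFDerivAt gf (Lg x) x := by
  have h0 := hasFDerivAt_coord 0 x
  have h1 := hasFDerivAt_coord 1 x
  have h2 := hasFDerivAt_coord 2 x
  have hr := (h0.mul h0).add (h1.mul h1)
  have h := (hr.mul hr).add (h2.mul h2)
  have hfun : (fun y : Fin 3 → ℝ => (y 0 * y 0 + y 1 * y 1) * (y 0 * y 0 + y 1 * y 1) + y 2 * y 2)
      = gf := by funext y; unfold gf; ring
  change HasFDerivAt (fun y : Fin 3 → ℝ => (y 0 * y 0 + y 1 * y 1) * (y 0 * y 0 + y 1 * y 1) + y 2 * y 2) _ x at h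
  rw [hfun] at h
  refine h.congr_fderiv ?_
  ext v
  simp [Lg, ContinuousLinearMap.proj_apply]
  ring

lemma Lg_apply (x v : Fin 3 → ℝ) :
    Lg x v = 4 * x 0 * (x 0 ^ 2 + x 1 ^ 2) * v 0 + 4 * x 1 * (x 0 ^ 2 + x 1 ^ 2) * v 1
      + 2 * x 2 * v 2 := by
  simp [Lg, ContinuousLinearMap.proj_apply]
  try ring

lemma single_apply (i j : Fin 3) : (Pi.single i 1 : Fin 3 → ℝ) j = if j = i then 1 else 0 := by
  rcases eq_or_ne j i with h | h
  · subst h; simp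
  · simp [Pi.single_eq_of_ne h, h]

lemma hasFDerivAt_hnormSq (x : Fin 3 → ℝ) (h : gf x ≠ 0) :
    HasFDerivAt hnormSq ((1 / (2 * Real.sqrt (gf x))) • Lg x) x :=
  (hasFDerivAt_gf x).sqrt h

/-- candidate for X1 hnormSq -/
noncomputable def v1 (y : Fin 3 → ℝ) : ℝ :=
  (2 * y 0 * (y 0 ^ 2 + y 1 ^ 2) - y 1 * y 2) * gf y ^ (-(1:ℝ)/2)

noncomputable def v2 (y : Fin 3 → ℝ) : ℝ :=
  (2 * y 1 * (y 0 ^ 2 + y 1 ^ 2) + y 0 * y 2) * gf y ^ (-(1:ℝ)/2)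

lemma rpow_neg_half (y : Fin 3 → ℝ) : gf y ^ (-(1:ℝ)/2) = 1 / Real.sqrt (gf y) := by
  rw [neg_div, Real.rpow_neg (gf_nonneg y), Real.sqrt_eq_rpow]
  exact (one_div _).symm

lemma X1_hnormSq_eq (y : Fin 3 → ℝ) (h : gf y ≠ 0) : X1 hnormSq y = v1 y := by
  have hS := hasFDerivAt_hnormSq y h
  have hs : Real.sqrt (gf y) ≠ 0 := Real.sqrt_ne_zero'.2 (lt_of_le_of_ne (gf_nonneg y) (Ne.symm h))
  rw [X1, pd_eq hS, pd_eq hS]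
  simp [ContinuousLinearMap.smul_apply, Lg_apply, single_apply, v1, rpow_neg_half]
  field_simp
  ring

lemma X2_hnormSq_eq (y : Fin 3 → ℝ) (h : gf y ≠ 0) : X2 hnormSq y = v2 y := by
  have hS := hasFDerivAt_hnormSq y h
  have hs : Real.sqrt (gf y) ≠ 0 := Real.sqrt_ne_zero'.2 (lt_of_le_of_ne (gf_nonneg y) (Ne.symm h))
  rw [X2, pd_eq hS, pd_eq hS]
  simp [ContinuousLinearMap.smul_apply, Lg_apply, single_apply, v2, rpow_neg_half]
  field_simp
  ring


lemma gf_cont : Continuous gf := by unfold gf; fun_prop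

lemma X1_congr {u v : (Fin 3 → ℝ) → ℝ} {x : Fin 3 → ℝ} (h : u =ᶠ[nhds x] v) :
    X1 u x = X1 v x := by unfold X1 pd; rw [h.fderiv_eq]

lemma X2_congr {u v : (Fin 3 → ℝ) → ℝ} {x : Fin 3 → ℝ} (h : u =ᶠ[nhds x] v) :
    X2 u x = X2 v x := by unfold X2 pd; rw [h.fderiv_eq]

lemma X1_v1 (x : Fin 3 → ℝ) (hg : gf x ≠ 0) :
    X1 v1 x = (2 * (x 0 ^ 2 + x 1 ^ 2) + 4 * x 0 ^ 2 + x 1 ^ 2) * gf x ^ (-(1:ℝ)/2)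
      + (-(1:ℝ)/2) * gf x ^ (-(1:ℝ)/2 - 1) * (2 * x 0 * (x 0 ^ 2 + x 1 ^ 2) - x 1 * x 2)
          * (4 * x 0 * (x 0 ^ 2 + x 1 ^ 2) - 2 * x 1 * x 2) := by
  have h0 := hasFDerivAt_coord 0 x
  have h1 := hasFDerivAt_coord 1 x
  have h2 := hasFDerivAt_coord 2 x
  have e : (fun y : Fin 3 → ℝ => 2 * ((y 0 * y 0 + y 1 * y 1) * y 0) - y 1 * y 2)
      = (fun y : Fin 3 → ℝ => 2 * y 0 * (y 0 ^ 2 + y 1 ^ 2) - y 1 * y 2) := by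
    funext y; ring
  have hnum := ((((h0.mul h0).add (h1.mul h1)).mul h0).const_mul 2).sub (h1.mul h2)
  change HasFDerivAt (fun y : Fin 3 → ℝ => 2 * ((y 0 * y 0 + y 1 * y 1) * y 0) - y 1 * y 2) _ x at hnum
  rw [e] at hnum
  have hrpow := (hasFDerivAt_gf x).rpow_const (p := -(1:ℝ)/2) (Or.inl hg)
  have hv : HasFDerivAt v1 _ x := hnum.mul hrpow
  rw [X1, pd_eq hv, pd_eq hv]
  simp [Lg_apply, single_apply, ContinuousLinearMap.smul_apply, ContinuousLinearMap.add_apply,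
    ContinuousLinearMap.smulRight_apply, ContinuousLinearMap.sub_apply,
    ContinuousLinearMap.proj_apply]
  ring

lemma X2_v2 (x : Fin 3 → ℝ) (hg : gf x ≠ 0) :
    X2 v2 x = (2 * (x 0 ^ 2 + x 1 ^ 2) + 4 * x 1 ^ 2 + x 0 ^ 2) * gf x ^ (-(1:ℝ)/2)
      + (-(1:ℝ)/2) * gf x ^ (-(1:ℝ)/2 - 1) * (2 * x 1 * (x 0 ^ 2 + x 1 ^ 2) + x 0 * x 2)
          * (4 * x 1 * (x 0 ^ 2 + x 1 ^ 2) + 2 * x 0 * x 2) := by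
  have h0 := hasFDerivAt_coord 0 x
  have h1 := hasFDerivAt_coord 1 x
  have h2 := hasFDerivAt_coord 2 x
  have e : (fun y : Fin 3 → ℝ => 2 * ((y 0 * y 0 + y 1 * y 1) * y 1) + y 0 * y 2)
      = (fun y : Fin 3 → ℝ => 2 * y 1 * (y 0 ^ 2 + y 1 ^ 2) + y 0 * y 2) := by
    funext y; ring
  have hnum := ((((h0.mul h0).add (h1.mul h1)).mul h1).const_mul 2).add (h0.mul h2)
  change HasFDerivAt (fun y : Fin 3 → ℝ => 2 * ((y 0 * y 0 + y 1 * y 1) * y 1) + y 0 * y 2) _ x at hnum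
  rw [e] at hnum
  have hrpow := (hasFDerivAt_gf x).rpow_const (p := -(1:ℝ)/2) (Or.inl hg)
  have hv : HasFDerivAt v2 _ x := hnum.mul hrpow
  rw [X2, pd_eq hv, pd_eq hv]
  simp [Lg_apply, single_apply, ContinuousLinearMap.smul_apply, ContinuousLinearMap.add_apply,
    ContinuousLinearMap.smulRight_apply, ContinuousLinearMap.sub_apply,
    ContinuousLinearMap.proj_apply]
  ring

end HAux

open HAux

theorem laplacianH_hnormSq (x : Fin 3 → ℝ) (hx : hnorm x ≠ 0) :
    X1 (X1 hnormSq) x + X2 (X2 hnormSq) x =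
      9 * (x 0 ^ 2 + x 1 ^ 2) / hnorm x ^ 2 -
        ((X1 hnormSq x) ^ 2 + (X2 hnormSq x) ^ 2) / hnorm x ^ 2 := by
  have hg : gf x ≠ 0 := by
    intro h
    apply hx
    have : hnorm x = gf x ^ ((1:ℝ)/4) := rfl
    rw [this, h, Real.zero_rpow (by norm_num)]
  have hgpos : 0 < gf x := lt_of_le_of_ne (gf_nonneg x) (Ne.symm hg)
  have hev : ∀ᶠ y in nhds x, gf y ≠ 0 := gf_cont.continuousAt.eventually_ne hg
  have hev1 : X1 hnormSq =ᶠ[nhds x] v1 := hev.mono fun y hy => X1_hnormSq_eq y hy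
  have hev2 : X2 hnormSq =ᶠ[nhds x] v2 := hev.mono fun y hy => X2_hnormSq_eq y hy
  set s := Real.sqrt (gf x) with hs_def
  have hs : s ≠ 0 := Real.sqrt_ne_zero'.2 hgpos
  have hp : gf x ^ (-(1:ℝ)/2) = 1 / s := rpow_neg_half x
  have hp3 : gf x ^ (-(1:ℝ)/2 - 1) = 1 / s ^ 3 := by
    have h1 : s ^ 3 = gf x ^ ((3:ℝ)/2) := by
      rw [hs_def, Real.sqrt_eq_rpow, ← Real.rpow_natCast (gf x ^ ((1:ℝ)/2)) 3,
        ← Real.rpow_mul (gf_nonneg x)]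
      norm_num
    rw [h1, show (-(1:ℝ)/2 - 1) = -((3:ℝ)/2) by norm_num, Real.rpow_neg (gf_nonneg x), one_div]
  have hn2 : hnorm x ^ 2 = s := by
    have : hnorm x = gf x ^ ((1:ℝ)/4) := rfl
    rw [this, hs_def, Real.sqrt_eq_rpow, ← Real.rpow_natCast (gf x ^ ((1:ℝ)/4)) 2,
      ← Real.rpow_mul (gf_nonneg x)]
    norm_num
  rw [X1_congr hev1, X2_congr hev2, X1_v1 x hg, X2_v2 x hg,
    X1_hnormSq_eq x hg, X2_hnormSq_eq x hg, v1, v2, hp, hp3, hn2]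
  field_simp
  ring
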